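/- Assume binary valuations (v_{ij} ∈ {0,1} for all i, j) and unit budgets (B_i = 1 for all i), and assume there exists an allocation giving every buyer strictly positive utility. Then an allocation x with u_i(x_i) > 0 for all i is leximin-optimal if and only if it maximizes the Nash welfare Π_i u_i(x_i) over all allocations; i.e., the set of leximin-optimal allocations equals the set of maximum-Nash-welfare allocations. -/

import Mathlib

open Finset

/-- The value at position `i` of the nondecreasing rearrangement of `v`. -/
noncomputable def sortedVal {n : ℕ} (v : Fin n → ℝ) (i : Fin n) : ℝ :=
  v (Tuple.sort v i)

/-- `v` is leximin-greater than `w`: after sorting both vectors in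
nondecreasing order, at the first index where they differ `v` is strictly
larger. -/
noncomputable def LexGt {n : ℕ} (v w : Fin n → ℝ) : Prop :=
  ∃ k : Fin n, (∀ i : Fin n, i < k → sortedVal v i = sortedVal w i) ∧
    sortedVal w k < sortedVal v k

section SortedTools
variable {n : ℕ}

lemma sortedVal_monotone (v : Fin n → ℝ) : Monotone (sortedVal v) :=
  Tuple.monotone_sort v

lemma sum_sortedVal (v : Fin n → ℝ) : ∑ j, sortedVal v j = ∑ i, v i :=
  Equiv.sum_comp (Tuple.sort v) v

/-- number of sorted values ≤ c equals number of values ≤ c -/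
lemma card_sortedVal_le (v : Fin n → ℝ) (c : ℝ) :
    (univ.filter fun j => sortedVal v j ≤ c).card
      = (univ.filter fun i => v i ≤ c).card := by
  have h : (univ.filter fun j => sortedVal v j ≤ c)
      = Finset.image (Tuple.sort v).symm (univ.filter fun i => v i ≤ c) := by
    ext j
    simp only [mem_filter, mem_univ, true_and, Finset.mem_image]; simp only [sortedVal]
    constructor
    · intro h; exact ⟨Tuple.sort v j, h, Equiv.symm_apply_apply _ _⟩
    · rintro ⟨i, hi, rfl⟩; rwa [Equiv.apply_symm_apply]
  rw [h, Finset.card_image_of_injective _ (Equiv.injective _)]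

lemma sortedVal_le_iff (v : Fin n → ℝ) (c : ℝ) (j : Fin n) :
    sortedVal v j ≤ c ↔ (j : ℕ) < (univ.filter fun i => v i ≤ c).card := by
  rw [← card_sortedVal_le v c]
  have := (Tuple.lt_card_le_iff_apply_le_of_monotone (f := v ∘ Tuple.sort v) (a := c)
    (j := j) (Tuple.monotone_sort v)).symm
  exact this

end SortedTools

section SortedTools2
variable {n : ℕ}

/-- the k-th smallest element (as index) of a finset of `Fin n` is ≥ k -/
lemma orderIsoOfFin_ge (B : Finset (Fin n)) {p : ℕ} (hp : B.card = p) (k : Fin p) :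
    (k : ℕ) ≤ ((B.orderIsoOfFin hp k : Fin n) : ℕ) := by
  induction' hk : (k : ℕ) with q ih generalizing k
  · exact Nat.zero_le _
  · have hq : q < p := by omega
    have hlt : (⟨q, hq⟩ : Fin p) < k := by
      rw [Fin.lt_def]; simpa [hk] using Nat.lt_succ_self q
    have h1 := ih ⟨q, hq⟩ rfl
    have h2 : ((B.orderIsoOfFin hp ⟨q, hq⟩ : Fin n) : ℕ)
        < ((B.orderIsoOfFin hp k : Fin n) : ℕ) := (B.orderIsoOfFin hp).strictMono hlt
    omega

/-- sum of a monotone function over the initial segment of size `B.card`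
is at most the sum over `B`. -/
lemma sum_initseg_le_sum (s : Fin n → ℝ) (hs : Monotone s) (B : Finset (Fin n)) :
    ∑ j ∈ univ.filter (fun j : Fin n => (j : ℕ) < B.card), s j ≤ ∑ i ∈ B, s i := by
  classical
  set A := univ.filter (fun j : Fin n => (j : ℕ) < B.card) with hA
  have hmem : ∀ j : Fin n, j ∈ A ↔ (j : ℕ) < B.card := by
    intro j; simp [hA]
  set φ : Fin n → Fin n := fun j =>
    if h : (j : ℕ) < B.card then (B.orderIsoOfFin rfl ⟨(j : ℕ), h⟩ : Fin n) else j with hφ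
  have hφmem : ∀ j ∈ A, φ j ∈ B := by
    intro j hj
    have h := (hmem j).1 hj
    simp only [hφ, dif_pos h]
    exact (B.orderIsoOfFin rfl ⟨(j : ℕ), h⟩).2
  have hle : ∀ j ∈ A, s j ≤ s (φ j) := by
    intro j hj
    have h := (hmem j).1 hj
    apply hs
    have := orderIsoOfFin_ge B rfl ⟨(j : ℕ), h⟩
    simp only [hφ, dif_pos h]
    exact Fin.le_def.2 this
  have heq : ∑ j ∈ A, s (φ j) = ∑ i ∈ B, s i := by
    refine Finset.sum_bij (fun j _ => φ j) hφmem ?_ ?_ (fun _ _ => rfl)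
    · intro a ha b hb hab
      have ha' := (hmem a).1 ha
      have hb' := (hmem b).1 hb
      simp only [hφ, dif_pos ha', dif_pos hb'] at hab
      have := (B.orderIsoOfFin rfl).injective (Subtype.ext hab)
      have := congrArg Fin.val this
      simpa [Fin.ext_iff] using this
    · intro b hb
      set k := (B.orderIsoOfFin rfl).symm ⟨b, hb⟩ with hk
      have hkcard : (k : ℕ) < B.card := k.2
      have hkn : (k : ℕ) < n := lt_of_lt_of_le hkcard (by simpa using Finset.card_le_card (Finset.subset_univ B))
      refine ⟨⟨(k : ℕ), hkn⟩, (hmem _).2 hkcard, ?_⟩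
      simp only [hφ, dif_pos hkcard]
      have : (⟨(k : ℕ), hkcard⟩ : Fin B.card) = k := rfl
      rw [this, hk]
      simp
  calc ∑ j ∈ A, s j ≤ ∑ j ∈ A, s (φ j) := Finset.sum_le_sum hle
    _ = ∑ i ∈ B, s i := heq

/-- sum of `v` over a set `B` equals sum of the sorted values over the
preimage of `B` under the sorting permutation. -/
lemma sum_set_eq_sum_sorted (v : Fin n → ℝ) (B : Finset (Fin n)) :
    ∑ i ∈ B, v i = ∑ j ∈ B.image (Tuple.sort v).symm, sortedVal v j := by
  classical
  rw [Finset.sum_image (by intro a _ b _ h; exact (Tuple.sort v).symm.injective h)]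
  apply Finset.sum_congr rfl
  intro i _
  simp [sortedVal]

end SortedTools2

section LexTools
variable {n : ℕ}

/-- prefix sums of the sorted vector -/
noncomputable def psum (v : Fin n → ℝ) (p : ℕ) : ℝ :=
  ∑ j ∈ univ.filter (fun j : Fin n => (j : ℕ) < p), sortedVal v j

lemma filter_lt_succ (k : Fin n) :
    univ.filter (fun j : Fin n => (j : ℕ) < (k : ℕ) + 1)
      = insert k (univ.filter (fun j : Fin n => (j : ℕ) < (k : ℕ))) := by
  ext j
  simp only [mem_filter, mem_univ, true_and, Finset.mem_insert]
  constructor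
  · intro h
    rcases Nat.lt_succ_iff_lt_or_eq.1 h with h' | h'
    · exact Or.inr h'
    · exact Or.inl (Fin.ext h')
  · rintro (rfl | h)
    · omega
    · omega

/-- If prefix sums of sorted `w` dominate those of sorted `u` and the sorted
vectors differ somewhere, then `w` is leximin-greater than `u`. -/
lemma lexGt_of_psum_ge (w u : Fin n → ℝ)
    (h : ∀ p : ℕ, psum u p ≤ psum w p)
    (hne : ∃ j, sortedVal w j ≠ sortedVal u j) : LexGt w u := by
  classical
  set D := univ.filter (fun j : Fin n => sortedVal w j ≠ sortedVal u j) with hD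
  have hDne : D.Nonempty := by
    obtain ⟨j, hj⟩ := hne
    exact ⟨j, by simp [hD, hj]⟩
  set k := D.min' hDne with hk
  have hkD : k ∈ D := D.min'_mem hDne
  have hkne : sortedVal w k ≠ sortedVal u k := by
    have := hkD; rw [hD] at this; simpa using this
  have heqlt : ∀ i : Fin n, i < k → sortedVal w i = sortedVal u i := by
    intro i hi
    by_contra hne'
    have hiD : i ∈ D := by simp [hD, hne']
    exact absurd (D.min'_le i hiD) (not_le.2 hi)
  refine ⟨k, heqlt, ?_⟩
  have hsum := h ((k : ℕ) + 1)
  rw [psum, psum, filter_lt_succ k, Finset.sum_insert (by simp),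
      Finset.sum_insert (by simp)] at hsum
  have heqsum : ∑ j ∈ univ.filter (fun j : Fin n => (j : ℕ) < (k : ℕ)), sortedVal u j
      = ∑ j ∈ univ.filter (fun j : Fin n => (j : ℕ) < (k : ℕ)), sortedVal w j := by
    apply Finset.sum_congr rfl
    intro j hj
    simp only [mem_filter, mem_univ, true_and] at hj
    exact (heqlt j (Fin.lt_def.2 hj)).symm
  rw [heqsum] at hsum
  have : sortedVal u k ≤ sortedVal w k := by linarith
  exact lt_of_le_of_ne this (Ne.symm hkne)

end LexTools

section LexTools2
variable {n : ℕ}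

lemma psum_eq_min (v : Fin n → ℝ) (p : ℕ) : psum v p = psum v (min p n) := by
  unfold psum
  congr 1
  ext j
  simp only [mem_filter, mem_univ, true_and]
  have := j.2
  omega

lemma card_initseg {p : ℕ} (hp : p ≤ n) :
    (univ.filter (fun j : Fin n => (j : ℕ) < p)).card = p := by
  have h : univ.filter (fun j : Fin n => (j : ℕ) < p)
      = Finset.map (Fin.castLEEmb hp) univ := by
    ext j
    simp only [mem_filter, mem_univ, true_and, Finset.mem_map]
    constructor
    · intro hj
      exact ⟨⟨(j : ℕ), hj⟩, by simp [Fin.ext_iff]⟩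
    · rintro ⟨k, -, rfl⟩
      simpa using k.2
  rw [h, Finset.card_map, Finset.card_univ, Fintype.card_fin]

/-- there is a set of indices realizing the prefix sum -/
lemma exists_prefix_set (v : Fin n → ℝ) {p : ℕ} (hp : p ≤ n) :
    ∃ A : Finset (Fin n), A.card = p ∧ psum v p = ∑ i ∈ A, v i := by
  classical
  refine ⟨(univ.filter (fun j : Fin n => (j : ℕ) < p)).image (Tuple.sort v), ?_, ?_⟩
  · rw [Finset.card_image_of_injective _ (Equiv.injective _), card_initseg hp]
  · rw [sum_set_eq_sum_sorted, Finset.image_image]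
    have h : (Tuple.sort v).symm ∘ (Tuple.sort v) = id := by
      funext i; simp
    rw [h, Finset.image_id]
    rfl

/-- prefix sum is at most the sum over any set of that cardinality -/
lemma psum_le_sum_set (v : Fin n → ℝ) (B : Finset (Fin n)) :
    psum v B.card ≤ ∑ i ∈ B, v i := by
  rw [sum_set_eq_sum_sorted]
  have hcard : (B.image (Tuple.sort v).symm).card = B.card :=
    Finset.card_image_of_injective _ (Equiv.injective _)
  have := sum_initseg_le_sum (sortedVal v) (sortedVal_monotone v)
    (B.image (Tuple.sort v).symm)
  rw [hcard] at this
  exact this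

/-- pointwise domination with a strict coordinate implies LexGt -/
lemma lexGt_of_pointwise (w u : Fin n → ℝ) (hle : ∀ i, u i ≤ w i)
    {a : Fin n} (ha : u a < w a) : LexGt w u := by
  classical
  apply lexGt_of_psum_ge
  · intro p
    rw [psum_eq_min w p, psum_eq_min u p]
    obtain ⟨A, hAcard, hAsum⟩ := exists_prefix_set w (min_le_right p n)
    rw [hAsum]
    calc psum u (min p n) = psum u A.card := by rw [hAcard]
      _ ≤ ∑ i ∈ A, u i := psum_le_sum_set u A
      _ ≤ ∑ i ∈ A, w i := Finset.sum_le_sum (fun i _ => hle i)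
  · by_contra hc
    push_neg at hc
    have h1 : ∑ j, sortedVal w j = ∑ j, sortedVal u j :=
      Finset.sum_congr rfl (fun j _ => hc j)
    rw [sum_sortedVal, sum_sortedVal] at h1
    have h2 : ∑ i, u i < ∑ i, w i :=
      Finset.sum_lt_sum (fun i _ => hle i) ⟨a, Finset.mem_univ a, ha⟩
    linarith

/-- a Robin Hood transfer (from a strictly richer to a strictly poorer agent,
not crossing) is a leximin improvement -/
lemma lexGt_of_transfer (w u : Fin n → ℝ) {a b : Fin n} {ε : ℝ} (hε : 0 < ε)
    (hwa : w a = u a + ε) (hwb : w b = u b - ε)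
    (hother : ∀ i, i ≠ a → i ≠ b → w i = u i)
    (hcross : u a + ε ≤ u b - ε) : LexGt w u := by
  classical
  have hab : a ≠ b := by
    intro h; rw [h] at hcross; linarith
  have huab : u a < u b := by linarith
  apply lexGt_of_psum_ge
  · intro p
    rw [psum_eq_min w p, psum_eq_min u p]
    obtain ⟨A, hAcard, hAsum⟩ := exists_prefix_set w (min_le_right p n)
    rw [hAsum]
    by_cases hbA : b ∈ A
    · by_cases haA : a ∈ A
      · -- both in A : sums equal
        have hsub : A ∩ {a, b} ⊆ A := Finset.inter_subset_left
        have hgsum : ∑ i ∈ A, (w i - u i) = ∑ i ∈ A ∩ {a, b}, (w i - u i) := by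
          refine (Finset.sum_subset hsub ?_).symm
          intro i hiA hi
          simp only [Finset.mem_inter, Finset.mem_insert, Finset.mem_singleton] at hi
          push_neg at hi
          rcases hi hiA with ⟨hia, hib⟩
          rw [hother i hia hib]; ring
        have hA2 : A ∩ {a, b} = {a, b} := by
          apply Finset.inter_eq_right.2
          intro i hi
          simp only [Finset.mem_insert, Finset.mem_singleton] at hi
          rcases hi with rfl | rfl
          · exact haA
          · exact hbA
        have : ∑ i ∈ A, (w i - u i) = 0 := by
          rw [hgsum, hA2, Finset.sum_pair hab, hwa, hwb]; ring
        rw [Finset.sum_sub_distrib] at this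
        have hsum_eq : ∑ i ∈ A, w i = ∑ i ∈ A, u i := by linarith
        rw [hsum_eq]
        calc psum u (min p n) = psum u A.card := by rw [hAcard]
          _ ≤ ∑ i ∈ A, u i := psum_le_sum_set u A
      · -- b ∈ A, a ∉ A : compare against A' = insert a (A.erase b)
        set A' := insert a (A.erase b) with hA'
        have haerase : a ∉ A.erase b := fun h => haA (Finset.mem_of_mem_erase h)
        have hA'card : A'.card = A.card := by
          rw [hA', Finset.card_insert_of_notMem haerase,
            Finset.card_erase_of_mem hbA]
          have : 1 ≤ A.card := Finset.card_pos.2 ⟨b, hbA⟩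
          omega
        have hsumA' : ∑ i ∈ A', u i = u a + (∑ i ∈ A, u i) - u b := by
          rw [hA', Finset.sum_insert haerase, Finset.sum_erase_eq_sub hbA]
          ring
        have hgsum : ∑ i ∈ A, (w i - u i) = ∑ i ∈ A ∩ {a, b}, (w i - u i) := by
          refine (Finset.sum_subset Finset.inter_subset_left ?_).symm
          intro i hiA hi
          simp only [Finset.mem_inter, Finset.mem_insert, Finset.mem_singleton] at hi
          push_neg at hi
          rcases hi hiA with ⟨hia, hib⟩
          rw [hother i hia hib]; ring
        have hA2 : A ∩ {a, b} = {b} := by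
          ext i
          simp only [Finset.mem_inter, Finset.mem_insert, Finset.mem_singleton]
          constructor
          · rintro ⟨hiA, rfl | rfl⟩
            · exact absurd hiA haA
            · rfl
          · rintro rfl; exact ⟨hbA, Or.inr rfl⟩
        rw [hA2, Finset.sum_singleton, hwb, Finset.sum_sub_distrib] at hgsum
        have hsumw : ∑ i ∈ A, w i = ∑ i ∈ A, u i - ε := by linarith
        have hmid : psum u (min p n) ≤ ∑ i ∈ A', u i := by
          calc psum u (min p n) = psum u A'.card := by rw [hA'card, hAcard]
            _ ≤ ∑ i ∈ A', u i := psum_le_sum_set u A'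
        rw [hsumw]
        rw [hsumA'] at hmid
        linarith
    · -- b ∉ A : pointwise
      have : ∀ i ∈ A, u i ≤ w i := by
        intro i hiA
        by_cases hia : i = a
        · subst hia; rw [hwa]; linarith
        · rw [hother i hia (fun h => hbA (h ▸ hiA))]
      calc psum u (min p n) = psum u A.card := by rw [hAcard]
        _ ≤ ∑ i ∈ A, u i := psum_le_sum_set u A
        _ ≤ ∑ i ∈ A, w i := Finset.sum_le_sum this
  · -- sorted vectors differ
    by_contra hc
    push_neg at hc
    have hfilter : univ.filter (fun i => w i ≤ u a) ⊆ (univ.filter (fun i => u i ≤ u a)).erase a := by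
      intro i hi
      simp only [mem_filter, mem_univ, true_and] at hi
      rcases eq_or_ne i a with rfl | hia
      · exfalso; rw [hwa] at hi; linarith
      · rcases eq_or_ne i b with rfl | hib
        · exfalso; rw [hwb] at hi; linarith
        · rw [hother i hia hib] at hi
          exact Finset.mem_erase.2 ⟨hia, by simp [hi]⟩
    have hacard : (univ.filter (fun i => w i ≤ u a)).card
        < (univ.filter (fun i => u i ≤ u a)).card := by
      have h1 := Finset.card_le_card hfilter
      have h2 : ((univ.filter (fun i => u i ≤ u a)).erase a).card
          < (univ.filter (fun i => u i ≤ u a)).card := by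
        apply Finset.card_erase_lt_of_mem
        simp
      omega
    have hs1 := card_sortedVal_le w (u a)
    have hs2 := card_sortedVal_le u (u a)
    have : (univ.filter fun j => sortedVal w j ≤ u a)
        = (univ.filter fun j => sortedVal u j ≤ u a) := by
      apply Finset.filter_congr
      intro j _
      rw [hc j]
    rw [this, hs2] at hs1
    omega

end LexTools2

section LevelBlock
variable {n : ℕ}

/-- If for every level set of `u` (sets `{i' : u i' ≤ u i}`) the sum of `ω`
is at most the sum of `u`, then `ω` cannot be leximin-greater than `u`. -/
lemma not_lexGt_of_levelsum (u ω : Fin n → ℝ)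
    (H : ∀ i : Fin n, ∑ i' ∈ univ.filter (fun i' => u i' ≤ u i), ω i'
        ≤ ∑ i' ∈ univ.filter (fun i' => u i' ≤ u i), u i') :
    ¬ LexGt ω u := by
  classical
  rintro ⟨k, heq, hlt⟩
  set c := sortedVal u k with hc
  set istar := Tuple.sort u k with histar
  have huistar : u istar = c := rfl
  set D := univ.filter (fun i' => u i' ≤ c) with hD
  set p := D.card with hp
  -- initial segment characterization
  have hseg : ∀ j : Fin n, sortedVal u j ≤ c ↔ (j : ℕ) < p := by
    intro j
    rw [sortedVal_le_iff u c j]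
  -- ∑ over D of u equals prefix sum
  have hDu : ∑ i ∈ D, u i = psum u p := by
    rw [sum_set_eq_sum_sorted]
    have himg : D.image (Tuple.sort u).symm
        = univ.filter (fun j : Fin n => (j : ℕ) < p) := by
      ext j
      simp only [Finset.mem_image, hD, mem_filter, mem_univ, true_and]
      constructor
      · rintro ⟨i, hi, rfl⟩
        rw [← hseg]
        simpa [sortedVal] using hi
      · intro hj
        refine ⟨Tuple.sort u j, ?_, by simp⟩
        rw [← hseg] at hj
        simpa [sortedVal] using hj
    rw [himg]
    rfl
  -- prefix sums comparison, strict
  have hkp : (k : ℕ) < p := (hseg k).1 (le_of_eq rfl)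
  have hstrict : psum u p < psum ω p := by
    unfold psum
    apply Finset.sum_lt_sum
    · intro j hj
      simp only [mem_filter, mem_univ, true_and] at hj
      rcases lt_trichotomy j k with h | h | h
      · exact le_of_eq (heq j h).symm
      · subst h; exact le_of_lt hlt
      · have h1 : sortedVal u j ≤ c := (hseg j).2 hj
        have h2 : sortedVal ω k ≤ sortedVal ω j := sortedVal_monotone ω (le_of_lt h)
        have : sortedVal u j < sortedVal ω j := by
          calc sortedVal u j ≤ c := h1
            _ < sortedVal ω k := hlt
            _ ≤ sortedVal ω j := h2
        exact le_of_lt this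
    · exact ⟨k, by simp [hkp], hlt⟩
  -- sums over D
  have hDω : psum ω p ≤ ∑ i ∈ D, ω i := psum_le_sum_set ω D
  have hHd := H istar
  rw [huistar] at hHd
  have : ∑ i ∈ D, ω i ≤ ∑ i ∈ D, u i := hHd
  rw [hDu] at this
  linarith

end LevelBlock

section Polytope
variable {n m : ℕ}

open scoped Classical in
/-- the set of items valued by some member of `S` -/
noncomputable def NSet (v : Fin n → Fin m → ℝ) (S : Finset (Fin n)) : Finset (Fin m) :=
  univ.filter fun j => ∃ i ∈ S, v i j = 1

/-- rank function -/
noncomputable def fcard (v : Fin n → Fin m → ℝ) (S : Finset (Fin n)) : ℝ :=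
  ((NSet v S).card : ℝ)

/-- membership in the polymatroid -/
def InP (v : Fin n → Fin m → ℝ) (s : Fin n → ℝ) : Prop :=
  (∀ i, 0 ≤ s i) ∧ ∀ S : Finset (Fin n), ∑ i ∈ S, s i ≤ fcard v S

def IsAlloc (x : Fin n → Fin m → ℝ) : Prop :=
  (∀ i j, 0 ≤ x i j) ∧ (∀ j, ∑ i, x i j ≤ 1)

noncomputable def tvec (v : Fin n → Fin m → ℝ) (x : Fin n → Fin m → ℝ) : Fin n → ℝ :=
  fun i => ∑ j, v i j * x i j

lemma vnonneg (v : Fin n → Fin m → ℝ) (hv : ∀ i j, v i j = 0 ∨ v i j = 1)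
    (i : Fin n) (j : Fin m) : 0 ≤ v i j := by
  rcases hv i j with h | h <;> rw [h] <;> norm_num

lemma vle1 (v : Fin n → Fin m → ℝ) (hv : ∀ i j, v i j = 0 ∨ v i j = 1)
    (i : Fin n) (j : Fin m) : v i j ≤ 1 := by
  rcases hv i j with h | h <;> rw [h] <;> norm_num

/-- easy direction : allocations give polymatroid points -/
lemma inP_of_alloc (v : Fin n → Fin m → ℝ) (hv : ∀ i j, v i j = 0 ∨ v i j = 1)
    (x : Fin n → Fin m → ℝ) (hx : IsAlloc x) : InP v (tvec v x) := by
  classical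
  constructor
  · intro i
    apply Finset.sum_nonneg
    intro j _
    exact mul_nonneg (vnonneg v hv i j) (hx.1 i j)
  · intro S
    have hcomm : ∑ i ∈ S, tvec v x i = ∑ j, ∑ i ∈ S, v i j * x i j := by
      unfold tvec
      rw [Finset.sum_comm]
    rw [hcomm]
    have hzero : ∀ j ∈ univ, j ∉ NSet v S → ∑ i ∈ S, v i j * x i j = 0 := by
      intro j _ hj
      apply Finset.sum_eq_zero
      intro i hi
      have : v i j ≠ 1 := by
        intro h
        exact hj (by simp [NSet]; exact ⟨i, hi, h⟩)
      rcases hv i j with h | h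
      · rw [h]; ring
      · exact absurd h this
    rw [← Finset.sum_subset (Finset.subset_univ (NSet v S)) hzero]
    unfold fcard
    calc ∑ j ∈ NSet v S, ∑ i ∈ S, v i j * x i j
        ≤ ∑ j ∈ NSet v S, (1 : ℝ) := by
          apply Finset.sum_le_sum
          intro j _
          calc ∑ i ∈ S, v i j * x i j ≤ ∑ i ∈ S, x i j := by
                apply Finset.sum_le_sum
                intro i _
                nlinarith [vle1 v hv i j, vnonneg v hv i j, hx.1 i j]
            _ ≤ ∑ i, x i j := Finset.sum_le_sum_of_subset_of_nonneg
                (Finset.subset_univ S) (fun i _ _ => hx.1 i j)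
            _ ≤ 1 := hx.2 j
      _ = ((NSet v S).card : ℝ) := by rw [Finset.sum_const, nsmul_eq_mul, mul_one]

/-- submodularity of the rank function -/
lemma fcard_submodular (v : Fin n → Fin m → ℝ) (S T : Finset (Fin n)) :
    fcard v (S ∪ T) + fcard v (S ∩ T) ≤ fcard v S + fcard v T := by
  classical
  have h1 : NSet v (S ∪ T) = NSet v S ∪ NSet v T := by
    ext j
    simp only [NSet, mem_filter, mem_univ, true_and, Finset.mem_union]
    constructor
    · rintro ⟨i, hi, hvi⟩
      rcases hi with h | h
      · exact Or.inl ⟨i, h, hvi⟩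
      · exact Or.inr ⟨i, h, hvi⟩
    · rintro (⟨i, hi, hvi⟩ | ⟨i, hi, hvi⟩)
      · exact ⟨i, Or.inl hi, hvi⟩
      · exact ⟨i, Or.inr hi, hvi⟩
  have h2 : NSet v (S ∩ T) ⊆ NSet v S ∩ NSet v T := by
    intro j hj
    simp only [NSet, mem_filter, mem_univ, true_and] at hj
    rcases hj with ⟨i, hi, hvi⟩
    simp only [Finset.mem_inter, NSet, mem_filter, mem_univ, true_and] at *
    exact ⟨⟨i, hi.1, hvi⟩, ⟨i, hi.2, hvi⟩⟩
  unfold fcard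
  have h3 := Finset.card_union_add_card_inter (NSet v S) (NSet v T)
  have h4 := Finset.card_le_card h2
  have h5 : (NSet v S ∩ NSet v T).card ≤ (NSet v S).card := by
    apply Finset.card_le_card
    exact Finset.inter_subset_left
  rw [h1]
  have h6 : (NSet v (S ∩ T)).card ≤ (NSet v S ∩ NSet v T).card := Finset.card_le_card h2
  have h7 : ((NSet v S ∪ NSet v T).card : ℝ) + ((NSet v S ∩ NSet v T).card : ℝ)
      = ((NSet v S).card : ℝ) + ((NSet v T).card : ℝ) := by exact_mod_cast h3
  have h8 : ((NSet v (S ∩ T)).card : ℝ) ≤ ((NSet v S ∩ NSet v T).card : ℝ) := by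
    exact_mod_cast h6
  linarith

end Polytope

section Layer
variable {n m : ℕ}

open scoped Classical

/-- buyer-side layer lemma : testing a linear functional with coefficients
antitone in `u` against level-set inequalities. -/
lemma level_layer (u δ : Fin n → ℝ) :
    ∀ N : ℕ, ∀ c : Fin n → ℝ,
      (univ.filter (fun i => 0 < c i)).card ≤ N →
      (∀ i, 0 ≤ c i) →
      (∀ i i', u i ≤ u i' → c i' ≤ c i) →
      (∀ i : Fin n, 0 ≤ ∑ i' ∈ univ.filter (fun i' => u i' ≤ u i), δ i') →
      0 ≤ ∑ i, c i * δ i := by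
  intro N
  induction N with
  | zero =>
    intro c hcard hc0 _ _
    have : ∀ i, c i = 0 := by
      intro i
      by_contra h
      have hpos : 0 < c i := lt_of_le_of_ne (hc0 i) (Ne.symm h)
      have : i ∈ univ.filter (fun i => 0 < c i) := by simp [hpos]
      have := Finset.card_pos.2 ⟨i, this⟩
      omega
    apply le_of_eq
    symm
    apply Finset.sum_eq_zero
    intro i _
    rw [this i, zero_mul]
  | succ N ih =>
    intro c hcard hc0 hanti hH
    by_cases hPos : (univ.filter (fun i => 0 < c i)).Nonempty
    · obtain ⟨i₀, hi₀mem, hi₀min⟩ :=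
        Finset.exists_min_image (univ.filter (fun i => 0 < c i)) c hPos
      set μ := c i₀ with hμ
      have hμpos : 0 < μ := by
        have := hi₀mem; simp only [mem_filter, mem_univ, true_and] at this
        exact this
      set c' : Fin n → ℝ := fun i => if 0 < c i then c i - μ else c i with hc'
      have hc'0 : ∀ i, 0 ≤ c' i := by
        intro i
        by_cases h : 0 < c i
        · have : μ ≤ c i := hi₀min i (by simp [h])
          simp only [hc', if_pos h]; linarith
        · simp only [hc', if_neg h]; exact hc0 i
      have hc'anti : ∀ i i', u i ≤ u i' → c' i' ≤ c' i := by
        intro i i' hu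
        have h1 : c i' ≤ c i := hanti i i' hu
        by_cases h' : 0 < c i'
        · have h : 0 < c i := lt_of_lt_of_le h' h1
          simp only [hc', if_pos h, if_pos h']; linarith
        · have : c i' ≤ 0 := le_of_not_gt h'
          have : c' i' ≤ 0 := by simp only [hc', if_neg h']; linarith
          linarith [hc'0 i]
      have hsubset : univ.filter (fun i => 0 < c' i)
          ⊆ (univ.filter (fun i => 0 < c i)).erase i₀ := by
        intro i hi
        simp only [mem_filter, mem_univ, true_and] at hi
        by_cases h : 0 < c i
        · simp only [hc', if_pos h] at hi
          refine Finset.mem_erase.2 ⟨?_, by simp [h]⟩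
          intro heq
          rw [heq] at hi
          simp only [hμ] at hi
          linarith
        · simp only [hc', if_neg h] at hi
          exact absurd hi h
      have hcard' : (univ.filter (fun i => 0 < c' i)).card ≤ N := by
        have h1 := Finset.card_le_card hsubset
        have h2 := Finset.card_erase_of_mem hi₀mem
        omega
      have hIH := ih c' hcard' hc'0 hc'anti hH
      -- the positive set of c is a level set of u
      obtain ⟨istar, histar, hmax⟩ :=
        Finset.exists_max_image (univ.filter (fun i => 0 < c i)) u hPos
      have hlevel : univ.filter (fun i => 0 < c i)
          = univ.filter (fun i' => u i' ≤ u istar) := by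
        ext i
        simp only [mem_filter, mem_univ, true_and]
        constructor
        · intro h; exact hmax i (by simp [h])
        · intro h
          have hci : c istar ≤ c i := hanti i istar h
          have : 0 < c istar := by
            have := histar; simp only [mem_filter, mem_univ, true_and] at this
            exact this
          linarith
      have hposum : 0 ≤ ∑ i ∈ univ.filter (fun i => 0 < c i), δ i := by
        rw [hlevel]; exact hH istar
      have hdecomp : ∑ i, c i * δ i
          = ∑ i, c' i * δ i + μ * ∑ i ∈ univ.filter (fun i => 0 < c i), δ i := by
        rw [Finset.mul_sum, ← Finset.sum_filter_add_sum_filter_not univ (fun i => 0 < c i) (fun i => c i * δ i),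
           ← Finset.sum_filter_add_sum_filter_not univ (fun i => 0 < c i) (fun i => c' i * δ i)]
        have e1 : ∑ i ∈ univ.filter (fun i => 0 < c i), c i * δ i
            = ∑ i ∈ univ.filter (fun i => 0 < c i), (c' i * δ i + μ * δ i) := by
          apply Finset.sum_congr rfl
          intro i hi
          simp only [mem_filter, mem_univ, true_and] at hi
          simp only [hc', if_pos hi]
          ring
        have e2 : ∑ i ∈ univ.filter (fun i => ¬ 0 < c i), c i * δ i
            = ∑ i ∈ univ.filter (fun i => ¬ 0 < c i), c' i * δ i := by
          apply Finset.sum_congr rfl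
          intro i hi
          simp only [mem_filter, mem_univ, true_and] at hi
          simp only [hc', if_neg hi]
        rw [e1, e2, Finset.sum_add_distrib, ← Finset.mul_sum]
        ring
      rw [hdecomp]
      have : 0 ≤ μ * ∑ i ∈ univ.filter (fun i => 0 < c i), δ i :=
        mul_nonneg (le_of_lt hμpos) hposum
      linarith
    · -- positive set empty : all c are 0
      rw [Finset.not_nonempty_iff_eq_empty] at hPos
      have : ∀ i, c i = 0 := by
        intro i
        by_contra h
        have hpos : 0 < c i := lt_of_le_of_ne (hc0 i) (Ne.symm h)
        have : i ∈ univ.filter (fun i => 0 < c i) := by simp [hpos]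
        rw [hPos] at this
        exact absurd this (Finset.notMem_empty i)
      apply le_of_eq
      symm
      apply Finset.sum_eq_zero
      intro i _
      rw [this i, zero_mul]

end Layer

section ItemLayer
variable {n m : ℕ}

open scoped Classical

/-- max over buyers of an item, floored at 0 -/
noncomputable def mpmax (v : Fin n → Fin m → ℝ) (w : Fin n → ℝ) (j : Fin m) : ℝ :=
  (univ.filter fun i => v i j = 1).fold max 0 w

lemma mpmax_nonneg (v : Fin n → Fin m → ℝ) (w : Fin n → ℝ) (j : Fin m) :
    0 ≤ mpmax v w j :=
  (Finset.le_fold_max _).2 (Or.inl le_rfl)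

lemma le_mpmax (v : Fin n → Fin m → ℝ) (w : Fin n → ℝ) {j : Fin m} {i : Fin n}
    (h : v i j = 1) : w i ≤ mpmax v w j :=
  (Finset.le_fold_max _).2 (Or.inr ⟨i, by simp [h], le_rfl⟩)

/-- item-side layer lemma : any polymatroid point is dominated by the greedy
value on every nonnegative-weighted linear functional. -/
lemma item_layer (v : Fin n → Fin m → ℝ) (s : Fin n → ℝ)
    (hs0 : ∀ i, 0 ≤ s i) (hsP : ∀ S : Finset (Fin n), ∑ i ∈ S, s i ≤ fcard v S) :
    ∀ N : ℕ, ∀ w : Fin n → ℝ, (univ.filter (fun i => 0 < w i)).card ≤ N →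
      ∑ i, w i * s i ≤ ∑ j, mpmax v w j := by
  intro N
  induction N with
  | zero =>
    intro w hcard
    have hw : ∀ i, w i ≤ 0 := by
      intro i
      by_contra h
      push_neg at h
      have : i ∈ univ.filter (fun i => 0 < w i) := by simp [h]
      have := Finset.card_pos.2 ⟨i, this⟩
      omega
    calc ∑ i, w i * s i ≤ ∑ i, (0 : ℝ) :=
          Finset.sum_le_sum (fun i _ => mul_nonpos_of_nonpos_of_nonneg (hw i) (hs0 i))
      _ = 0 := by simp
      _ ≤ ∑ j, mpmax v w j := Finset.sum_nonneg (fun j _ => mpmax_nonneg v w j)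
  | succ N ih =>
    intro w hcard
    by_cases hPos : (univ.filter (fun i => 0 < w i)).Nonempty
    · obtain ⟨i₀, hi₀mem, hi₀min⟩ :=
        Finset.exists_min_image (univ.filter (fun i => 0 < w i)) w hPos
      set μ := w i₀ with hμ
      have hμpos : 0 < μ := by
        have := hi₀mem; simp only [mem_filter, mem_univ, true_and] at this; exact this
      set Pos := univ.filter (fun i => 0 < w i) with hPosdef
      set w' : Fin n → ℝ := fun i => if 0 < w i then w i - μ else w i with hw'
      have hw'le : ∀ i, w' i ≤ w i := by
        intro i
        by_cases h : 0 < w i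
        · simp only [hw', if_pos h]; linarith
        · simp only [hw', if_neg h]; exact le_rfl
      have hsubset : univ.filter (fun i => 0 < w' i) ⊆ Pos.erase i₀ := by
        intro i hi
        simp only [mem_filter, mem_univ, true_and] at hi
        by_cases h : 0 < w i
        · simp only [hw', if_pos h] at hi
          refine Finset.mem_erase.2 ⟨?_, by simp [hPosdef, h]⟩
          intro heq; rw [heq] at hi; simp only [hμ] at hi; linarith
        · simp only [hw', if_neg h] at hi; exact absurd hi h
      have hcard' : (univ.filter (fun i => 0 < w' i)).card ≤ N := by
        have h1 := Finset.card_le_card hsubset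
        have h2 := Finset.card_erase_of_mem hi₀mem
        have h3 := hcard
        omega
      have hIH := ih w' hcard'
      -- decompose the sum
      have hdecomp : ∑ i, w i * s i = ∑ i, w' i * s i + μ * ∑ i ∈ Pos, s i := by
        rw [Finset.mul_sum,
          ← Finset.sum_filter_add_sum_filter_not univ (fun i => 0 < w i) (fun i => w i * s i),
          ← Finset.sum_filter_add_sum_filter_not univ (fun i => 0 < w i) (fun i => w' i * s i)]
        have e1 : ∑ i ∈ univ.filter (fun i => 0 < w i), w i * s i
            = ∑ i ∈ univ.filter (fun i => 0 < w i), (w' i * s i + μ * s i) := by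
          apply Finset.sum_congr rfl
          intro i hi
          simp only [mem_filter, mem_univ, true_and] at hi
          simp only [hw', if_pos hi]; ring
        have e2 : ∑ i ∈ univ.filter (fun i => ¬ 0 < w i), w i * s i
            = ∑ i ∈ univ.filter (fun i => ¬ 0 < w i), w' i * s i := by
          apply Finset.sum_congr rfl
          intro i hi
          simp only [mem_filter, mem_univ, true_and] at hi
          simp only [hw', if_neg hi]
        rw [e1, e2, Finset.sum_add_distrib, ← Finset.mul_sum]
        ring
      have hPsum : ∑ i ∈ Pos, s i ≤ fcard v Pos := hsP Pos
      -- express fcard as a sum of indicators over items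
      have hfcard : fcard v Pos = ∑ j, (if j ∈ NSet v Pos then (1:ℝ) else 0) := by
        unfold fcard
        rw [Finset.sum_ite_mem, Finset.univ_inter, Finset.sum_const, nsmul_eq_mul, mul_one]
      -- per-item inequality
      have hitem : ∀ j : Fin m,
          mpmax v w' j + μ * (if j ∈ NSet v Pos then (1:ℝ) else 0) ≤ mpmax v w j := by
        intro j
        by_cases hj : j ∈ NSet v Pos
        · rw [if_pos hj]
          simp only [NSet, mem_filter, mem_univ, true_and] at hj
          obtain ⟨i₁, hi₁Pos, hvi₁⟩ := hj
          have hwi₁ : μ ≤ w i₁ := hi₀min i₁ hi₁Pos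
          have hmp1 : μ ≤ mpmax v w j := le_trans hwi₁ (le_mpmax v w hvi₁)
          have hmp2 : mpmax v w' j ≤ mpmax v w j - μ := by
            apply (Finset.fold_max_le _).2
            constructor
            · linarith
            · intro i hi
              simp only [mem_filter, mem_univ, true_and] at hi
              by_cases h : 0 < w i
              · simp only [hw', if_pos h]
                have := le_mpmax v w hi
                linarith
              · simp only [hw', if_neg h]
                push_neg at h
                linarith
          linarith
        · rw [if_neg hj]
          have : mpmax v w' j ≤ mpmax v w j := by
            apply (Finset.fold_max_le _).2
            refine ⟨mpmax_nonneg v w j, ?_⟩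
            intro i hi
            simp only [mem_filter, mem_univ, true_and] at hi
            exact le_trans (hw'le i) (le_mpmax v w hi)
          linarith
      calc ∑ i, w i * s i = ∑ i, w' i * s i + μ * ∑ i ∈ Pos, s i := hdecomp
        _ ≤ ∑ j, mpmax v w' j + μ * fcard v Pos := by
            have := mul_le_mul_of_nonneg_left hPsum (le_of_lt hμpos)
            linarith
        _ = ∑ j, (mpmax v w' j + μ * (if j ∈ NSet v Pos then (1:ℝ) else 0)) := by
            rw [Finset.sum_add_distrib, hfcard, Finset.mul_sum]
        _ ≤ ∑ j, mpmax v w j := Finset.sum_le_sum (fun j _ => hitem j)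
    · rw [Finset.not_nonempty_iff_eq_empty] at hPos
      have hw : ∀ i, w i ≤ 0 := by
        intro i
        by_contra h
        push_neg at h
        have : i ∈ univ.filter (fun i => 0 < w i) := by simp [h]
        rw [hPos] at this
        exact absurd this (Finset.notMem_empty i)
      calc ∑ i, w i * s i ≤ ∑ i, (0 : ℝ) :=
            Finset.sum_le_sum (fun i _ => mul_nonpos_of_nonpos_of_nonneg (hw i) (hs0 i))
        _ = 0 := by simp
        _ ≤ ∑ j, mpmax v w j := Finset.sum_nonneg (fun j _ => mpmax_nonneg v w j)

end ItemLayer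

section Hall
variable {n m : ℕ}

open scoped Classical

/-- greedy allocation achieving the item-side bound -/
lemma exists_greedy (v : Fin n → Fin m → ℝ) (hv : ∀ i j, v i j = 0 ∨ v i j = 1)
    (w : Fin n → ℝ) :
    ∃ x : Fin n → Fin m → ℝ, IsAlloc x ∧ ∑ i, w i * tvec v x i = ∑ j, mpmax v w j := by
  have hch : ∀ j : Fin m, ∃ col : Fin n → ℝ, (∀ i, 0 ≤ col i) ∧ (∑ i, col i ≤ 1) ∧
      (∑ i, w i * (v i j * col i) = mpmax v w j) := by
    intro j
    rcases eq_or_lt_of_le (mpmax_nonneg v w j) with h0 | hpos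
    · refine ⟨fun _ => 0, fun i => le_rfl, by simp, by simp [← h0]⟩
    · have hex : ∃ i ∈ univ.filter (fun i => v i j = 1), mpmax v w j ≤ w i := by
        rcases (Finset.le_fold_max (f := w) (b := (0:ℝ))
            (s := univ.filter (fun i => v i j = 1)) (mpmax v w j)).1 le_rfl with h | h
        · exfalso; linarith
        · exact h
      obtain ⟨i₁, hi₁mem, hi₁⟩ := hex
      simp only [mem_filter, mem_univ, true_and] at hi₁mem
      have hle : w i₁ ≤ mpmax v w j := le_mpmax v w hi₁mem
      have heq : w i₁ = mpmax v w j := le_antisymm hle hi₁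
      refine ⟨fun i => if i = i₁ then 1 else 0, ?_, ?_, ?_⟩
      · intro i; by_cases h : i = i₁ <;> simp [h]
      · simp
      · rw [Finset.sum_eq_single i₁]
        · simp [hi₁mem, heq]
        · intro i _ hne; simp [hne]
        · intro h; exact absurd (Finset.mem_univ i₁) h
  choose col hcol using hch
  refine ⟨fun i j => col j i, ⟨fun i j => (hcol j).1 i, fun j => (hcol j).2.1⟩, ?_⟩
  unfold tvec
  calc ∑ i, w i * ∑ j, v i j * col j i
      = ∑ i, ∑ j, w i * (v i j * col j i) := by
        apply Finset.sum_congr rfl; intro i _; rw [Finset.mul_sum]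
    _ = ∑ j, ∑ i, w i * (v i j * col j i) := Finset.sum_comm
    _ = ∑ j, mpmax v w j := Finset.sum_congr rfl (fun j _ => (hcol j).2.2)

/-- the hard (Hall) direction : every polymatroid point is achievable -/
theorem hall_alloc (v : Fin n → Fin m → ℝ) (hv : ∀ i j, v i j = 0 ∨ v i j = 1)
    (s : Fin n → ℝ) (hs : InP v s) :
    ∃ x : Fin n → Fin m → ℝ, IsAlloc x ∧ tvec v x = s := by
  by_contra hcon
  push_neg at hcon
  -- the set of achievable utility vectors
  set Im : Set (Fin n → ℝ) := (fun x => tvec v x) '' {x | IsAlloc x} with hIm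
  have hsIm : s ∉ Im := by
    rintro ⟨x, hx, hxs⟩
    exact hcon x hx hxs
  -- Im is convex
  have hconv : Convex ℝ Im := by
    rintro t1 ⟨x1, hx1, rfl⟩ t2 ⟨x2, hx2, rfl⟩ a b ha hb hab
    refine ⟨fun i j => a * x1 i j + b * x2 i j, ⟨?_, ?_⟩, ?_⟩
    · intro i j
      have := hx1.1 i j; have := hx2.1 i j
      positivity
    · intro j
      rw [Finset.sum_add_distrib, ← Finset.mul_sum, ← Finset.mul_sum]
      have h1 := hx1.2 j; have h2 := hx2.2 j
      nlinarith [hx1.2 j, hx2.2 j]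
    · funext i
      simp only [Pi.add_apply, Pi.smul_apply, smul_eq_mul]
      unfold tvec
      rw [Finset.mul_sum, Finset.mul_sum, ← Finset.sum_add_distrib]
      apply Finset.sum_congr rfl
      intro j _
      ring
  -- Im is closed (compact image of a compact set)
  have hKcompact : IsCompact {x : Fin n → Fin m → ℝ | IsAlloc x} := by
    have hbox : IsCompact (Set.univ.pi fun _ : Fin n =>
        (Set.univ.pi fun _ : Fin m => Set.Icc (0:ℝ) 1)) :=
      isCompact_univ_pi (fun i => isCompact_univ_pi (fun j => isCompact_Icc))
    apply IsCompact.of_isClosed_subset hbox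
    · have h1 : IsClosed {x : Fin n → Fin m → ℝ | ∀ i j, 0 ≤ x i j} := by
        have : {x : Fin n → Fin m → ℝ | ∀ i j, 0 ≤ x i j}
            = ⋂ i, ⋂ j, {x : Fin n → Fin m → ℝ | 0 ≤ x i j} := by
          ext x; simp
        rw [this]
        apply isClosed_iInter; intro i; apply isClosed_iInter; intro j
        exact isClosed_le continuous_const ((continuous_apply j).comp (continuous_apply i))
      have h2 : IsClosed {x : Fin n → Fin m → ℝ | ∀ j, ∑ i, x i j ≤ 1} := by
        have : {x : Fin n → Fin m → ℝ | ∀ j, ∑ i, x i j ≤ 1}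
            = ⋂ j, {x : Fin n → Fin m → ℝ | ∑ i, x i j ≤ 1} := by
          ext x; simp
        rw [this]
        apply isClosed_iInter; intro j
        exact isClosed_le (by
          apply continuous_finset_sum
          intro i _
          exact (continuous_apply j).comp (continuous_apply i)) continuous_const
      have : {x : Fin n → Fin m → ℝ | IsAlloc x}
          = {x | ∀ i j, 0 ≤ x i j} ∩ {x | ∀ j, ∑ i, x i j ≤ 1} := by
        ext x; exact Iff.rfl
      rw [this]
      exact h1.inter h2
    · intro x hx
      simp only [Set.mem_pi, Set.mem_univ, forall_true_left, Set.mem_Icc]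
      intro i j
      refine ⟨hx.1 i j, ?_⟩
      calc x i j ≤ ∑ i', x i' j := by
            apply Finset.single_le_sum (fun i' _ => hx.1 i' j) (Finset.mem_univ i)
        _ ≤ 1 := hx.2 j
  have hTcont : Continuous (fun x : Fin n → Fin m → ℝ => tvec v x) := by
    apply continuous_pi
    intro i
    apply continuous_finset_sum
    intro j _
    exact continuous_const.mul ((continuous_apply j).comp (continuous_apply i))
  have hImclosed : IsClosed Im := (hKcompact.image hTcont).isClosed
  -- separation
  obtain ⟨f, α, hfa, hfs⟩ := geometric_hahn_banach_closed_point hconv hImclosed hsIm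
  set w : Fin n → ℝ := fun i => f (Pi.single i 1) with hw
  have hft : ∀ t : Fin n → ℝ, f t = ∑ i, w i * t i := by
    intro t
    have h1 : t = ∑ i, Pi.single i (t i) := (Finset.univ_sum_single t).symm
    rw [show f t = f (∑ i, Pi.single i (t i)) by rw [← h1], map_sum]
    apply Finset.sum_congr rfl
    intro i _
    have hsingle : Pi.single i (t i) = t i • ((Pi.single i (1:ℝ)) : Fin n → ℝ) := by
      funext k
      by_cases h : k = i
      · subst h; simp
      · simp [Pi.single_eq_of_ne h]
    rw [hsingle, map_smul, smul_eq_mul, hw]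
    ring
  -- greedy achieves the max
  obtain ⟨xg, hxg, hxgval⟩ := exists_greedy v hv w
  have hbound : ∑ i, w i * s i ≤ ∑ j, mpmax v w j := by
    apply item_layer v s hs.1 hs.2 (univ.filter (fun i => 0 < w i)).card w le_rfl
  have h1 : f (tvec v xg) < α := hfa _ ⟨xg, hxg, rfl⟩
  have h2 : α < f s := hfs
  have hA : f s = ∑ i, w i * s i := hft s
  have hB : f (tvec v xg) = ∑ j, mpmax v w j := by
    rw [hft (tvec v xg), hxgval]
  linarith

end Hall

section TightLevels
variable {n m : ℕ}

open scoped Classical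

/-- tightness predicate -/
noncomputable def Tight (v : Fin n → Fin m → ℝ) (t : Fin n → ℝ) (S : Finset (Fin n)) : Prop :=
  ∑ i ∈ S, t i = fcard v S

lemma tight_empty (v : Fin n → Fin m → ℝ) (t : Fin n → ℝ) : Tight v t ∅ := by
  unfold Tight fcard NSet
  simp

lemma tight_union_inter (v : Fin n → Fin m → ℝ) (t : Fin n → ℝ)
    (hP : ∀ S : Finset (Fin n), ∑ i ∈ S, t i ≤ fcard v S)
    {S T : Finset (Fin n)} (hS : Tight v t S) (hT : Tight v t T) :
    Tight v t (S ∪ T) ∧ Tight v t (S ∩ T) := by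
  have hsum : ∑ i ∈ S ∪ T, t i + ∑ i ∈ S ∩ T, t i = ∑ i ∈ S, t i + ∑ i ∈ T, t i :=
    Finset.sum_union_inter
  have hsub := fcard_submodular v S T
  have h1 := hP (S ∪ T)
  have h2 := hP (S ∩ T)
  unfold Tight at *
  constructor <;> linarith

/-- every agent lies in a minimal tight set all of whose members have smaller
utility, given local optimality -/
lemma exists_min_tight (v : Fin n → Fin m → ℝ) (d : Fin n → ℝ)
    (t : Fin n → ℝ) (htP : InP v t) (hupos : ∀ i, 0 < t i - d i)
    (LO1 : ∀ (a : Fin n) (ε : ℝ), 0 < ε →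
      ¬ InP v (fun i => t i + if i = a then ε else 0))
    (LO2 : ∀ (a b : Fin n) (ε : ℝ), t a - d a < t b - d b → 0 < ε →
      2*ε ≤ (t b - d b) - (t a - d a) →
      ¬ InP v (fun i => t i + (if i = a then ε else 0) - if i = b then ε else 0))
    (hd : ∀ i, 0 ≤ d i) :
    ∀ a : Fin n, ∃ A : Finset (Fin n), a ∈ A ∧ Tight v t A ∧
      ∀ b ∈ A, t b - d b ≤ t a - d a := by
  intro a
  -- step 1 : a is in some tight set
  have step1 : ∃ S : Finset (Fin n), a ∈ S ∧ Tight v t S := by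
    by_contra hcon
    push_neg at hcon
    set 𝒜 : Finset (Finset (Fin n)) := univ.filter (fun S => a ∈ S) with h𝒜
    have h𝒜ne : 𝒜.Nonempty := ⟨{a}, by simp [h𝒜]⟩
    set ε := 𝒜.inf' h𝒜ne (fun S => fcard v S - ∑ i ∈ S, t i) with hε
    have hεpos : 0 < ε := by
      rw [hε, Finset.lt_inf'_iff]
      intro S hS
      simp only [h𝒜, mem_filter, mem_univ, true_and] at hS
      have hne := hcon S hS
      have hle := htP.2 S
      unfold Tight at hne
      rcases lt_or_eq_of_le hle with h | h
      · linarith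
      · exact absurd h hne
    apply LO1 a ε hεpos
    constructor
    · intro i
      have hti := htP.1 i
      show 0 ≤ t i + if i = a then ε else 0
      by_cases h : i = a
      · rw [if_pos h]; linarith
      · rw [if_neg h]; linarith
    · intro S
      show ∑ i ∈ S, (t i + if i = a then ε else 0) ≤ fcard v S
      have hsum : ∑ i ∈ S, (t i + if i = a then ε else 0)
          = ∑ i ∈ S, t i + (if a ∈ S then ε else 0) := by
        rw [Finset.sum_add_distrib, Finset.sum_ite_eq' S a (fun _ => ε)]
      rw [hsum]
      by_cases haS : a ∈ S
      · rw [if_pos haS]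
        have : ε ≤ fcard v S - ∑ i ∈ S, t i := by
          rw [hε]
          exact Finset.inf'_le _ (by simp [h𝒜, haS])
        linarith
      · rw [if_neg haS]
        have := htP.2 S
        linarith
  -- step 2 : minimal tight set containing a
  set 𝒯 : Finset (Finset (Fin n)) := univ.filter (fun S => a ∈ S ∧ Tight v t S) with h𝒯
  have h𝒯ne : 𝒯.Nonempty := by
    obtain ⟨S, haS, hTS⟩ := step1
    exact ⟨S, by simp [h𝒯, haS, hTS]⟩
  obtain ⟨A, hA𝒯, hAmin⟩ := Finset.exists_min_image 𝒯 Finset.card h𝒯ne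
  have hAa : a ∈ A := by
    have := hA𝒯; simp only [h𝒯, mem_filter, mem_univ, true_and] at this; exact this.1
  have hAtight : Tight v t A := by
    have := hA𝒯; simp only [h𝒯, mem_filter, mem_univ, true_and] at this; exact this.2
  have hAmin' : ∀ S : Finset (Fin n), a ∈ S → Tight v t S → A ⊆ S := by
    intro S haS hTS
    have hinter : Tight v t (A ∩ S) := (tight_union_inter v t htP.2 hAtight hTS).2
    have hmem : (A ∩ S) ∈ 𝒯 := by
      simp only [h𝒯, mem_filter, mem_univ, true_and]
      exact ⟨Finset.mem_inter.2 ⟨hAa, haS⟩, hinter⟩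
    have hcard := hAmin _ hmem
    have hsub : A ∩ S ⊆ A := Finset.inter_subset_left
    have : A ∩ S = A := Finset.eq_of_subset_of_card_le hsub hcard
    intro i hi
    rw [← this] at hi
    exact (Finset.mem_inter.1 hi).2
  refine ⟨A, hAa, hAtight, ?_⟩
  -- step 3 : all members of A have utility at most that of a
  intro b hbA
  by_contra hgt
  push_neg at hgt
  have hba : b ≠ a := by
    intro h; rw [h] at hgt; linarith
  -- slack over sets containing a but not b
  set ℬ : Finset (Finset (Fin n)) := univ.filter (fun S => a ∈ S ∧ b ∉ S) with hℬ
  have hℬne : ℬ.Nonempty := ⟨{a}, by simp [hℬ, hba]⟩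
  set ε₁ := ℬ.inf' hℬne (fun S => fcard v S - ∑ i ∈ S, t i) with hε₁
  have hε₁pos : 0 < ε₁ := by
    rw [hε₁, Finset.lt_inf'_iff]
    intro S hS
    simp only [hℬ, mem_filter, mem_univ, true_and] at hS
    have hle := htP.2 S
    rcases lt_or_eq_of_le hle with h | h
    · linarith
    · exfalso
      exact hS.2 (hAmin' S hS.1 h hbA)
  set ε := min (min (((t b - d b) - (t a - d a))/2) (t b)) ε₁ with hεdef
  have htbpos : 0 < t b := by
    have := hupos b; have := hd b; linarith
  have hεpos : 0 < ε := by
    apply lt_min (lt_min _ htbpos) hε₁pos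
    linarith
  apply LO2 a b ε hgt hεpos
  · have h1 : ε ≤ ((t b - d b) - (t a - d a))/2 :=
      le_trans (min_le_left _ _) (min_le_left _ _)
    linarith
  · constructor
    · intro i
      show 0 ≤ t i + (if i = a then ε else 0) - if i = b then ε else 0
      rcases eq_or_ne i a with rfl | hia
      · rw [if_pos rfl, if_neg (Ne.symm hba)]
        have := htP.1 i
        linarith
      · rcases eq_or_ne i b with rfl | hib
        · rw [if_neg hia, if_pos rfl]
          have : ε ≤ t i := le_trans (min_le_left _ _) (min_le_right _ _)
          linarith
        · rw [if_neg hia, if_neg hib]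
          have := htP.1 i
          linarith
    · intro S
      show ∑ i ∈ S, (t i + (if i = a then ε else 0) - if i = b then ε else 0) ≤ fcard v S
      have hsum : ∑ i ∈ S, (t i + (if i = a then ε else 0) - if i = b then ε else 0)
          = ∑ i ∈ S, t i + (if a ∈ S then ε else 0) - (if b ∈ S then ε else 0) := by
        rw [Finset.sum_sub_distrib, Finset.sum_add_distrib,
          Finset.sum_ite_eq' S a (fun _ => ε), Finset.sum_ite_eq' S b (fun _ => ε)]
      rw [hsum]
      by_cases haS : a ∈ S
      · by_cases hbS : b ∈ S
        · rw [if_pos haS, if_pos hbS]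
          have := htP.2 S
          linarith
        · rw [if_pos haS, if_neg hbS]
          have : ε₁ ≤ fcard v S - ∑ i ∈ S, t i := by
            rw [hε₁]
            exact Finset.inf'_le _ (by simp [hℬ, haS, hbS])
          have hεε₁ : ε ≤ ε₁ := min_le_right _ _
          linarith
      · rw [if_neg haS]
        have := htP.2 S
        by_cases hbS : b ∈ S
        · rw [if_pos hbS]; linarith
        · rw [if_neg hbS]; linarith

/-- under local optimality all level sets of the utility are tight -/
lemma tight_level_sets (v : Fin n → Fin m → ℝ) (d : Fin n → ℝ)
    (t : Fin n → ℝ) (htP : InP v t) (hupos : ∀ i, 0 < t i - d i)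
    (LO1 : ∀ (a : Fin n) (ε : ℝ), 0 < ε →
      ¬ InP v (fun i => t i + if i = a then ε else 0))
    (LO2 : ∀ (a b : Fin n) (ε : ℝ), t a - d a < t b - d b → 0 < ε →
      2*ε ≤ (t b - d b) - (t a - d a) →
      ¬ InP v (fun i => t i + (if i = a then ε else 0) - if i = b then ε else 0))
    (hd : ∀ i, 0 ≤ d i) :
    ∀ i₀ : Fin n,
      ∑ i ∈ univ.filter (fun i => t i - d i ≤ t i₀ - d i₀), t i
        = fcard v (univ.filter (fun i => t i - d i ≤ t i₀ - d i₀)) := by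
  have hex := exists_min_tight v d t htP hupos LO1 LO2 hd
  choose A hAmem hAtight hAle using hex
  have tight_sup : ∀ I : Finset (Fin n), Tight v t (I.sup A) := by
    intro I
    induction I using Finset.induction with
    | empty => simpa using tight_empty v t
    | insert _ _ hnotmem ih =>
      rw [Finset.sup_insert]
      exact (tight_union_inter v t htP.2 (hAtight _) ih).1
  intro i₀
  set D := univ.filter (fun i => t i - d i ≤ t i₀ - d i₀) with hD
  have hDsup : D.sup A = D := by
    apply Finset.Subset.antisymm
    · intro b hb
      rw [Finset.mem_sup] at hb
      obtain ⟨a, haD, hbA⟩ := hb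
      have h1 := hAle a b hbA
      have h2 : t a - d a ≤ t i₀ - d i₀ := by
        have := haD; simp only [hD, mem_filter, mem_univ, true_and] at this; exact this
      simp only [hD, mem_filter, mem_univ, true_and]
      linarith
    · intro a ha
      have : A a ⊆ D.sup A := Finset.le_sup ha
      exact this (hAmem a)
  have := tight_sup D
  rw [hDsup] at this
  exact this

end TightLevels

section Main
variable {n m : ℕ}

open scoped Classical

/-- local optimality implies Nash maximality -/
lemma lo_implies_nash (v : Fin n → Fin m → ℝ) (hv : ∀ i j, v i j = 0 ∨ v i j = 1)
    (d : Fin n → ℝ) (hd : ∀ i, 0 ≤ d i)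
    (x : Fin n → Fin m → ℝ) (hxa : IsAlloc x)
    (hupos : ∀ i, 0 < tvec v x i - d i)
    (LO1 : ∀ (a : Fin n) (ε : ℝ), 0 < ε →
      ¬ InP v (fun i => tvec v x i + if i = a then ε else 0))
    (LO2 : ∀ (a b : Fin n) (ε : ℝ),
      tvec v x a - d a < tvec v x b - d b → 0 < ε →
      2*ε ≤ (tvec v x b - d b) - (tvec v x a - d a) →
      ¬ InP v (fun i => tvec v x i + (if i = a then ε else 0) - if i = b then ε else 0))
    (y : Fin n → Fin m → ℝ) (hya : IsAlloc y)
    (hypos : ∀ i, 0 < tvec v y i - d i) :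
    ∏ i, (tvec v y i - d i) ≤ ∏ i, (tvec v x i - d i) := by
  have htP : InP v (tvec v x) := inP_of_alloc v hv x hxa
  have hyP : InP v (tvec v y) := inP_of_alloc v hv y hya
  have htl := tight_level_sets v d (tvec v x) htP hupos LO1 LO2 hd
  -- apply the buyer layer lemma
  set u : Fin n → ℝ := fun i => tvec v x i - d i with hu
  set ω : Fin n → ℝ := fun i => tvec v y i - d i with hω
  have hkey : 0 ≤ ∑ i, (u i)⁻¹ * (tvec v x i - tvec v y i) := by
    apply level_layer u (fun i => tvec v x i - tvec v y i)
      (univ.filter (fun i => 0 < (u i)⁻¹)).card _ le_rfl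
    · intro i
      exact le_of_lt (inv_pos.2 (hupos i))
    · intro i i' hle
      apply inv_anti₀ (hupos i)
      simpa [hu] using hle
    · intro i
      have h1 := htl i
      have h2 := hyP.2 (univ.filter (fun i' => tvec v x i' - d i' ≤ tvec v x i - d i))
      have hsplit : ∑ i' ∈ univ.filter (fun i' => u i' ≤ u i),
          (tvec v x i' - tvec v y i')
          = ∑ i' ∈ univ.filter (fun i' => tvec v x i' - d i' ≤ tvec v x i - d i), tvec v x i'
            - ∑ i' ∈ univ.filter (fun i' => tvec v x i' - d i' ≤ tvec v x i - d i), tvec v y i' := by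
        rw [← Finset.sum_sub_distrib]
      rw [hsplit]
      linarith
  -- convert to ∑ ω/u ≤ n
  have hsum : ∑ i, (ω i / u i) ≤ (n : ℝ) := by
    have h1 : ∀ i : Fin n, (u i)⁻¹ * (tvec v x i - tvec v y i) = 1 - ω i / u i := by
      intro i
      have hne : u i ≠ 0 := ne_of_gt (hupos i)
      field_simp [hu, hω]
      simp only [hu, hω]; ring
    have h2 : ∑ i, (u i)⁻¹ * (tvec v x i - tvec v y i)
        = (n : ℝ) - ∑ i, ω i / u i := by
      rw [Finset.sum_congr rfl (fun i _ => h1 i), Finset.sum_sub_distrib]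
      simp
    linarith [hkey, h2.symm ▸ hkey]
  -- products via logarithms
  have hlog : ∑ i, Real.log (ω i) ≤ ∑ i, Real.log (u i) := by
    have h1 : ∀ i : Fin n, Real.log (ω i) - Real.log (u i) ≤ ω i / u i - 1 := by
      intro i
      have hpos : 0 < ω i / u i := div_pos (hypos i) (hupos i)
      have := Real.log_le_sub_one_of_pos hpos
      rwa [Real.log_div (ne_of_gt (hypos i)) (ne_of_gt (hupos i))] at this
    have h2 : ∑ i, (Real.log (ω i) - Real.log (u i)) ≤ ∑ i, (ω i / u i - 1) :=
      Finset.sum_le_sum (fun i _ => h1 i)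
    rw [Finset.sum_sub_distrib, Finset.sum_sub_distrib] at h2
    simp only [Finset.sum_const, Finset.card_univ, Fintype.card_fin, nsmul_eq_mul, mul_one] at h2
    linarith
  have hprodω : 0 < ∏ i, ω i := Finset.prod_pos (fun i _ => hypos i)
  have hprodu : 0 < ∏ i, u i := Finset.prod_pos (fun i _ => hupos i)
  have hlogprod : Real.log (∏ i, ω i) ≤ Real.log (∏ i, u i) := by
    rw [Real.log_prod (fun i _ => ne_of_gt (hypos i)),
      Real.log_prod (fun i _ => ne_of_gt (hupos i))]
    exact hlog
  exact (Real.log_le_log_iff hprodω hprodu).1 hlogprod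

/-- local optimality implies leximin optimality -/
lemma lo_implies_leximin (v : Fin n → Fin m → ℝ) (hv : ∀ i j, v i j = 0 ∨ v i j = 1)
    (d : Fin n → ℝ) (hd : ∀ i, 0 ≤ d i)
    (x : Fin n → Fin m → ℝ) (hxa : IsAlloc x)
    (hupos : ∀ i, 0 < tvec v x i - d i)
    (LO1 : ∀ (a : Fin n) (ε : ℝ), 0 < ε →
      ¬ InP v (fun i => tvec v x i + if i = a then ε else 0))
    (LO2 : ∀ (a b : Fin n) (ε : ℝ),
      tvec v x a - d a < tvec v x b - d b → 0 < ε →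
      2*ε ≤ (tvec v x b - d b) - (tvec v x a - d a) →
      ¬ InP v (fun i => tvec v x i + (if i = a then ε else 0) - if i = b then ε else 0))
    (y : Fin n → Fin m → ℝ) (hya : IsAlloc y) :
    ¬ LexGt (fun i => tvec v y i - d i) (fun i => tvec v x i - d i) := by
  have htP : InP v (tvec v x) := inP_of_alloc v hv x hxa
  have hyP : InP v (tvec v y) := inP_of_alloc v hv y hya
  have htl := tight_level_sets v d (tvec v x) htP hupos LO1 LO2 hd
  apply not_lexGt_of_levelsum
  intro i
  have h1 := htl i
  have h2 := hyP.2 (univ.filter (fun i' => tvec v x i' - d i' ≤ tvec v x i - d i))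
  have hd1 : ∑ i' ∈ univ.filter (fun i' => tvec v x i' - d i' ≤ tvec v x i - d i),
      (tvec v y i' - d i')
      = ∑ i' ∈ univ.filter (fun i' => tvec v x i' - d i' ≤ tvec v x i - d i), tvec v y i'
        - ∑ i' ∈ univ.filter (fun i' => tvec v x i' - d i' ≤ tvec v x i - d i), d i' :=
    Finset.sum_sub_distrib _ _
  have hd2 : ∑ i' ∈ univ.filter (fun i' => tvec v x i' - d i' ≤ tvec v x i - d i),
      (tvec v x i' - d i')
      = ∑ i' ∈ univ.filter (fun i' => tvec v x i' - d i' ≤ tvec v x i - d i), tvec v x i'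
        - ∑ i' ∈ univ.filter (fun i' => tvec v x i' - d i' ≤ tvec v x i - d i), d i' :=
    Finset.sum_sub_distrib _ _
  show ∑ i' ∈ univ.filter (fun i' => tvec v x i' - d i' ≤ tvec v x i - d i),
      (tvec v y i' - d i')
      ≤ ∑ i' ∈ univ.filter (fun i' => tvec v x i' - d i' ≤ tvec v x i - d i),
      (tvec v x i' - d i')
  rw [hd1, hd2]
  linarith

end Main

section Main2
variable {n m : ℕ}

open scoped Classical

/-- leximin optimality gives both local optimality conditions -/
lemma leximin_implies_lo (v : Fin n → Fin m → ℝ) (hv : ∀ i j, v i j = 0 ∨ v i j = 1)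
    (d : Fin n → ℝ) (x : Fin n → Fin m → ℝ)
    (hlex : ¬ ∃ y : Fin n → Fin m → ℝ, IsAlloc y ∧
      LexGt (fun i => tvec v y i - d i) (fun i => tvec v x i - d i)) :
    (∀ (a : Fin n) (ε : ℝ), 0 < ε →
      ¬ InP v (fun i => tvec v x i + if i = a then ε else 0)) ∧
    (∀ (a b : Fin n) (ε : ℝ),
      tvec v x a - d a < tvec v x b - d b → 0 < ε →
      2*ε ≤ (tvec v x b - d b) - (tvec v x a - d a) →
      ¬ InP v (fun i => tvec v x i + (if i = a then ε else 0) - if i = b then ε else 0)) := by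
  constructor
  · intro a ε hε hInP
    obtain ⟨z, hz, hzt⟩ := hall_alloc v hv _ hInP
    apply hlex
    refine ⟨z, hz, ?_⟩
    have hzt' : (fun i => tvec v z i - d i)
        = fun i => (tvec v x i + if i = a then ε else 0) - d i := by
      rw [hzt]
    rw [hzt']
    apply lexGt_of_pointwise _ _ ?_ (a := a) ?_
    · intro i
      by_cases h : i = a
      · rw [if_pos h]; linarith
      · rw [if_neg h]; linarith
    · rw [if_pos rfl]; linarith
  · intro a b ε hab hε h2ε hInP
    have hba : a ≠ b := by intro h; rw [h] at hab; linarith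
    obtain ⟨z, hz, hzt⟩ := hall_alloc v hv _ hInP
    apply hlex
    refine ⟨z, hz, ?_⟩
    have hzt' : (fun i => tvec v z i - d i)
        = fun i => (tvec v x i + (if i = a then ε else 0) - if i = b then ε else 0) - d i := by
      rw [hzt]
    rw [hzt']
    apply lexGt_of_transfer _ _ hε (a := a) (b := b)
    · rw [if_pos rfl, if_neg hba]; ring
    · rw [if_neg (Ne.symm hba), if_pos rfl]; ring
    · intro i hia hib
      rw [if_neg hia, if_neg hib]; ring
    · linarith

/-- Nash maximality gives both local optimality conditions -/
lemma nash_implies_lo (v : Fin n → Fin m → ℝ) (hv : ∀ i j, v i j = 0 ∨ v i j = 1)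
    (d : Fin n → ℝ) (x : Fin n → Fin m → ℝ)
    (hupos : ∀ i, 0 < tvec v x i - d i)
    (hnash : ∀ y : Fin n → Fin m → ℝ, IsAlloc y → (∀ i, 0 < tvec v y i - d i) →
      ∏ i, (tvec v y i - d i) ≤ ∏ i, (tvec v x i - d i)) :
    (∀ (a : Fin n) (ε : ℝ), 0 < ε →
      ¬ InP v (fun i => tvec v x i + if i = a then ε else 0)) ∧
    (∀ (a b : Fin n) (ε : ℝ),
      tvec v x a - d a < tvec v x b - d b → 0 < ε →
      2*ε ≤ (tvec v x b - d b) - (tvec v x a - d a) →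
      ¬ InP v (fun i => tvec v x i + (if i = a then ε else 0) - if i = b then ε else 0)) := by
  constructor
  · intro a ε hε hInP
    obtain ⟨z, hz, hzt⟩ := hall_alloc v hv _ hInP
    have hzi : ∀ i, tvec v z i = tvec v x i + if i = a then ε else 0 := by
      intro i; rw [hzt]
    have hzpos : ∀ i, 0 < tvec v z i - d i := by
      intro i
      rw [hzi i]
      by_cases h : i = a
      · rw [if_pos h]; have := hupos i; linarith
      · rw [if_neg h]; have := hupos i; linarith
    have happ := hnash z hz hzpos
    have hEpos : 0 < ∏ i ∈ univ.erase a, (tvec v x i - d i) :=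
      Finset.prod_pos (fun i _ => hupos i)
    have hprod_z : ∏ i, (tvec v z i - d i)
        = (tvec v x a - d a + ε) * ∏ i ∈ univ.erase a, (tvec v x i - d i) := by
      rw [← Finset.mul_prod_erase univ _ (Finset.mem_univ a)]
      congr 1
      · rw [hzi a, if_pos rfl]; ring
      · apply Finset.prod_congr rfl
        intro i hi
        rw [hzi i, if_neg (Finset.ne_of_mem_erase hi)]
        ring
    have hprod_x : ∏ i, (tvec v x i - d i)
        = (tvec v x a - d a) * ∏ i ∈ univ.erase a, (tvec v x i - d i) :=
      (Finset.mul_prod_erase univ _ (Finset.mem_univ a)).symm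
    rw [hprod_z, hprod_x] at happ
    nlinarith [hupos a]
  · intro a b ε hab hε h2ε hInP
    have hba : a ≠ b := by intro h; rw [h] at hab; linarith
    obtain ⟨z, hz, hzt⟩ := hall_alloc v hv _ hInP
    have hzi : ∀ i, tvec v z i
        = tvec v x i + (if i = a then ε else 0) - if i = b then ε else 0 := by
      intro i; rw [hzt]
    have hzpos : ∀ i, 0 < tvec v z i - d i := by
      intro i
      rw [hzi i]
      rcases eq_or_ne i a with rfl | hia
      · rw [if_pos rfl, if_neg hba]; have := hupos i; linarith
      · rcases eq_or_ne i b with rfl | hib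
        · rw [if_neg hia, if_pos rfl]; have := hupos a; linarith
        · rw [if_neg hia, if_neg hib]; have := hupos i; linarith
    have happ := hnash z hz hzpos
    have hbmem : b ∈ univ.erase a := Finset.mem_erase.2 ⟨Ne.symm hba, Finset.mem_univ b⟩
    set E := (univ.erase a).erase b with hE
    have hEpos : 0 < ∏ i ∈ E, (tvec v x i - d i) :=
      Finset.prod_pos (fun i _ => hupos i)
    have hprod_x : ∏ i, (tvec v x i - d i)
        = (tvec v x a - d a) * ((tvec v x b - d b) * ∏ i ∈ E, (tvec v x i - d i)) := by
      rw [← Finset.mul_prod_erase univ _ (Finset.mem_univ a),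
        ← Finset.mul_prod_erase (univ.erase a) _ hbmem]
    have hprod_z : ∏ i, (tvec v z i - d i)
        = (tvec v x a - d a + ε) * ((tvec v x b - d b - ε) * ∏ i ∈ E, (tvec v x i - d i)) := by
      rw [← Finset.mul_prod_erase univ _ (Finset.mem_univ a),
        ← Finset.mul_prod_erase (univ.erase a) _ hbmem]
      congr 1
      · rw [hzi a, if_pos rfl, if_neg hba]; ring
      · congr 1
        · rw [hzi b, if_neg (Ne.symm hba), if_pos rfl]; ring
        · apply Finset.prod_congr rfl
          intro i hi
          have hia : i ≠ a := Finset.ne_of_mem_erase (Finset.mem_of_mem_erase hi)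
          have hib : i ≠ b := Finset.ne_of_mem_erase hi
          rw [hzi i, if_neg hia, if_neg hib]
          ring
    rw [hprod_z, hprod_x] at happ
    have hkey : (tvec v x a - d a) * (tvec v x b - d b)
        < (tvec v x a - d a + ε) * (tvec v x b - d b - ε) := by
      nlinarith [mul_le_mul_of_nonneg_left h2ε hε.le]
    have h2 : (tvec v x a - d a) * ((tvec v x b - d b) * ∏ i ∈ E, (tvec v x i - d i))
        < (tvec v x a - d a + ε) * ((tvec v x b - d b - ε) * ∏ i ∈ E, (tvec v x i - d i)) := by
      calc (tvec v x a - d a) * ((tvec v x b - d b) * ∏ i ∈ E, (tvec v x i - d i))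
          = ((tvec v x a - d a) * (tvec v x b - d b)) * ∏ i ∈ E, (tvec v x i - d i) := by ring
        _ < ((tvec v x a - d a + ε) * (tvec v x b - d b - ε)) * ∏ i ∈ E, (tvec v x i - d i) :=
            mul_lt_mul_of_pos_right hkey hEpos
        _ = (tvec v x a - d a + ε) * ((tvec v x b - d b - ε) * ∏ i ∈ E, (tvec v x i - d i)) := by ring
    linarith

end Main2

/-- With binary valuations and unit budgets, under the assumption that some
allocation gives every buyer strictly positive utility, an allocation with
positive utilities is leximin-optimal iff it maximizes the Nash welfare. -/
theorem leximin_iff_mnw_binary_unit_budget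
    (n m : ℕ) (v : Fin n → Fin m → ℝ) (d : Fin n → ℝ)
    (hv : ∀ i j, v i j = 0 ∨ v i j = 1) (hd : ∀ i, 0 ≤ d i)
    (hexist : ∃ y : Fin n → Fin m → ℝ, (∀ i j, 0 ≤ y i j) ∧
      (∀ j, ∑ i, y i j ≤ 1) ∧ (∀ i, 0 < (∑ j, v i j * y i j) - d i))
    (x : Fin n → Fin m → ℝ)
    (hx : ∀ i j, 0 ≤ x i j) (halloc : ∀ j, ∑ i, x i j ≤ 1)
    (hupos : ∀ i, 0 < (∑ j, v i j * x i j) - d i) :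
    (¬ ∃ y : Fin n → Fin m → ℝ, (∀ i j, 0 ≤ y i j) ∧ (∀ j, ∑ i, y i j ≤ 1) ∧
        LexGt (fun i => (∑ j, v i j * y i j) - d i)
          (fun i => (∑ j, v i j * x i j) - d i))
    ↔
    (∀ y : Fin n → Fin m → ℝ, (∀ i j, 0 ≤ y i j) → (∀ j, ∑ i, y i j ≤ 1) →
      (∀ i, 0 < (∑ j, v i j * y i j) - d i) →
      ∏ i, ((∑ j, v i j * y i j) - d i) ≤ ∏ i, ((∑ j, v i j * x i j) - d i)) := by
  classical
  have hxalloc : IsAlloc x := ⟨hx, halloc⟩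
  have hupos' : ∀ i, 0 < tvec v x i - d i := hupos
  constructor
  · intro hlex y hy0 hy1 hypos
    have hlex' : ¬ ∃ z : Fin n → Fin m → ℝ, IsAlloc z ∧
        LexGt (fun i => tvec v z i - d i) (fun i => tvec v x i - d i) := by
      rintro ⟨z, hz, hzl⟩
      exact hlex ⟨z, hz.1, hz.2, hzl⟩
    obtain ⟨LO1, LO2⟩ := leximin_implies_lo v hv d x hlex'
    exact lo_implies_nash v hv d hd x hxalloc hupos' LO1 LO2 y ⟨hy0, hy1⟩ hypos
  · rintro hnash ⟨y, hy0, hy1, hylex⟩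
    obtain ⟨LO1, LO2⟩ := nash_implies_lo v hv d x hupos'
      (fun z hz hzpos => hnash z hz.1 hz.2 hzpos)
    exact lo_implies_leximin v hv d hd x hxalloc hupos' LO1 LO2 y ⟨hy0, hy1⟩ hylex
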